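/- If σ' is a taxi polygon, then σ' does not occur as a factor (a string of consecutive letters) of the turn-word σ of any taxi walk starting at the origin. -/

import Mathlib

open Filter

/-- The oriented step relation of the Manhattan lattice. -/
def taxiStep (u v : ℤ × ℤ) : Prop :=
  (Even u.2 ∧ v = (u.1 + 1, u.2)) ∨
  (Odd u.2 ∧ v = (u.1 - 1, u.2)) ∨
  (Even u.1 ∧ v = (u.1, u.2 + 1)) ∨
  (Odd u.1 ∧ v = (u.1, u.2 - 1))

/-- Perpendicularity of two step vectors. -/
def perp (d e : ℤ × ℤ) : Prop := d.1 * e.1 + d.2 * e.2 = 0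

instance (d e : ℤ × ℤ) : Decidable (perp d e) := by unfold perp; infer_instance

/-- The walk `l` turns at its `i`-th vertex (meaningful for `1 ≤ i ≤ l.length - 2`). -/
def turnAt (l : List (ℤ × ℤ)) (i : ℕ) : Prop :=
  perp (l.getD i 0 - l.getD (i - 1) 0) (l.getD (i + 1) 0 - l.getD i 0)

instance (l : List (ℤ × ℤ)) (i : ℕ) : Decidable (turnAt l i) := by
  unfold turnAt; infer_instance

/-- A taxi walk, recorded as its list of vertices (a walk of length `n` has `n + 1` vertices). -/
def IsTaxiWalk (l : List (ℤ × ℤ)) : Prop :=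
  l ≠ [] ∧ l.Nodup ∧
  (∀ i, i + 1 < l.length → taxiStep (l.getD i 0) (l.getD (i + 1) 0)) ∧
  (∀ i, 1 ≤ i → i + 2 < l.length → ¬(turnAt l i ∧ turnAt l (i + 1)))

/-- The set of taxi walks of length `n` starting at the origin. -/
def originWalks (n : ℕ) : Set (List (ℤ × ℤ)) :=
  {l | IsTaxiWalk l ∧ l.length = n + 1 ∧ l.getD 0 0 = 0}

/-- `taxiCount n` is `c_n`, the number of taxi walks of length `n` starting at the origin. -/
noncomputable def taxiCount (n : ℕ) : ℕ := (originWalks n).ncard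

/-- The turn-word of a walk: `true` (the letter `t`) where the walk turns,
`false` (the letter `s`) where it goes straight. -/
def turnWord (l : List (ℤ × ℤ)) : List Bool :=
  (List.range (l.length - 2)).map fun i => decide (turnAt l (i + 1))

/-- The encoding of a taxi walk starting at the origin: the first coordinate is `true`
(for `N`) if `v₁ = (0,1)` and `false` (for `E`) if `v₁ = (1,0)`; the second is the turn-word. -/
def encode (l : List (ℤ × ℤ)) : Bool × List Bool :=
  (decide (l.getD 1 0 = (0, 1)), turnWord l)

/-- A bridge: a taxi walk from `(0,0)` to `(1,0)` staying at abscissa `≥ 1` after the start,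
whose last step is horizontal and ends at maximal abscissa. -/
def IsBridge (l : List (ℤ × ℤ)) : Prop :=
  IsTaxiWalk l ∧ 2 ≤ l.length ∧ l.getD 0 0 = (0, 0) ∧ l.getD 1 0 = (1, 0) ∧
  (∀ i, 1 ≤ i → i < l.length → 1 ≤ (l.getD i 0).1) ∧
  (l.getD (l.length - 1) 0).2 = (l.getD (l.length - 2) 0).2 ∧
  (∀ i, i < l.length → (l.getD i 0).1 ≤ (l.getD (l.length - 1) 0).1)

/-- `bridgeCount n` is `b_n`, the number of bridges of length `n`, with `b_0 = 1`. -/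
noncomputable def bridgeCount : ℕ → ℕ
  | 0 => 1
  | n + 1 => {l : List (ℤ × ℤ) | IsBridge l ∧ l.length = n + 2}.ncard

/-- The normalizing symmetry `f_{(x,y)}` of the oriented Manhattan lattice. -/
def normMap (p : ℤ × ℤ) (q : ℤ × ℤ) : ℤ × ℤ :=
  if Even p.1 then
    (if Even p.2 then (q.1 - p.1, q.2 - p.2) else (-(q.1 - p.1), q.2 - p.2))
  else
    (if Even p.2 then (q.1 - p.1, -(q.2 - p.2)) else (-(q.1 - p.1), -(q.2 - p.2)))

/-- The vertex `v_i` is a cutvertex of the bridge `l`. -/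
def IsCutAt (l : List (ℤ × ℤ)) (i : ℕ) : Prop :=
  0 < i ∧ i + 1 < l.length ∧
  IsBridge (l.take (i + 1)) ∧
  l.getD (i + 1) 0 = l.getD i 0 + (1, 0) ∧
  IsBridge ((l.drop i).map (normMap (l.getD i 0)))

/-- An irreducible bridge: a bridge with no cutvertex. -/
def IsIrreducibleBridge (l : List (ℤ × ℤ)) : Prop :=
  IsBridge l ∧ ∀ i, ¬ IsCutAt l i

/-- `irrBridgeCount n` is `a_n`, the number of irreducible bridges of length `n`, with `a_0 = 0`. -/
noncomputable def irrBridgeCount : ℕ → ℕ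
  | 0 => 0
  | n + 1 => {l : List (ℤ × ℤ) | IsIrreducibleBridge l ∧ l.length = n + 2}.ncard

/-- `σ` is a taxi polygon of length `k`: a word in `{s,t}^{k-1}` (`true = t`, `false = s`)
such that, for some first step to `(0,1)` or `(1,0)`, the walk of length `k` starting at the
origin whose turn/straight behaviour is prescribed by `σ` follows the edge orientations of
the Manhattan lattice, ends at the origin, visits no vertex other than the origin twice, and
makes no two consecutive turns. -/
def IsTaxiPolygon (k : ℕ) (σ : List Bool) : Prop :=
  σ.length + 1 = k ∧
  ∃ l : List (ℤ × ℤ),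
    l.length = k + 1 ∧
    l.getD 0 0 = 0 ∧
    (l.getD 1 0 = (0, 1) ∨ l.getD 1 0 = (1, 0)) ∧
    (∀ i, i + 1 < l.length → taxiStep (l.getD i 0) (l.getD (i + 1) 0)) ∧
    l.getD k 0 = 0 ∧
    l.dropLast.Nodup ∧
    (∀ i, 1 ≤ i → i + 2 < l.length → ¬(turnAt l i ∧ turnAt l (i + 1))) ∧
    turnWord l = σ

section TaxiAux

private theorem tw_step_iff (u v : ℤ × ℤ) : taxiStep u v ↔
    (v.2 = u.2 ∧ v.1 = u.1 + 1 - 2 * (u.2 % 2)) ∨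
    (v.1 = u.1 ∧ v.2 = u.2 + 1 - 2 * (u.1 % 2)) := by
  simp only [taxiStep, Int.even_iff, Int.odd_iff, Prod.ext_iff]
  omega

private def twSw (q : ℤ × ℤ) : ℤ × ℤ := (q.2, q.1)

private theorem tw_normMap_step (p u v : ℤ × ℤ) (h : taxiStep u v) :
    taxiStep (normMap p u) (normMap p v) := by
  rw [tw_step_iff] at h ⊢
  unfold normMap
  split_ifs with h1 h2 h2 <;> try dsimp only
  all_goals simp only [Int.even_iff, Int.not_even_iff] at h1 h2
  all_goals omega

private theorem tw_sw_step (u v : ℤ × ℤ) (h : taxiStep u v) : taxiStep (twSw u) (twSw v) := by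
  rw [tw_step_iff] at h ⊢
  unfold twSw
  try dsimp only
  omega

private theorem tw_normMap_perp (p u v w x : ℤ × ℤ) :
    perp (normMap p u - normMap p v) (normMap p w - normMap p x) ↔ perp (u - v) (w - x) := by
  unfold normMap perp
  split_ifs <;> dsimp only [Prod.fst_sub, Prod.snd_sub] <;> constructor <;> intro h <;>
    nlinarith [h]

private theorem tw_sw_perp (u v w x : ℤ × ℤ) :
    perp (twSw u - twSw v) (twSw w - twSw x) ↔ perp (u - v) (w - x) := by
  unfold twSw perp
  dsimp only [Prod.fst_sub, Prod.snd_sub]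
  constructor <;> intro h <;> linarith

private theorem tw_normMap_inj (p : ℤ × ℤ) : Function.Injective (normMap p) := by
  intro a b h
  unfold normMap at h
  split_ifs at h <;> simp only [Prod.mk.injEq] at h <;> simp only [Prod.ext_iff] <;> omega

private theorem tw_sw_inj : Function.Injective twSw := by
  intro a b h
  simp only [twSw, Prod.ext_iff] at h ⊢
  tauto

private theorem tw_normMap_self (p : ℤ × ℤ) : normMap p p = 0 := by
  unfold normMap; split_ifs <;> simp [Prod.ext_iff]

private theorem tw_stepDet (u v w w' : ℤ × ℤ) (h1 : taxiStep u v) (h2 : taxiStep v w)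
    (h3 : taxiStep v w') (hp : perp (v - u) (w - v) ↔ perp (v - u) (w' - v)) : w = w' := by
  rw [tw_step_iff] at h1 h2 h3
  unfold perp at hp
  simp only [Prod.fst_sub, Prod.snd_sub] at hp
  rcases Int.emod_two_eq u.1 with p1 | p1 <;> rcases Int.emod_two_eq u.2 with p2 | p2 <;>
  rcases Int.emod_two_eq v.1 with q1 | q1 <;> rcases Int.emod_two_eq v.2 with q2 | q2 <;>
  rcases h1 with ⟨a1, a2⟩ | ⟨a1, a2⟩ <;> rcases h2 with ⟨b1, b2⟩ | ⟨b1, b2⟩ <;>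
  rcases h3 with ⟨c1, c2⟩ | ⟨c1, c2⟩ <;>
    · simp only [p1, p2, q1, q2, mul_zero, mul_one] at a2 b2 c2
      simp only [Prod.ext_iff, a1, a2, b1, b2, c1, c2] at hp ⊢
      (try ring_nf at hp); (try ring_nf)
      first
      | omega
      | trivial

/-- Existence of a lattice symmetry carrying a given directed edge to a given
edge out of the origin. -/
private theorem tw_exists_sym (p0 v1 t : ℤ × ℤ) (h : taxiStep p0 v1)
    (ht : t = (0, 1) ∨ t = (1, 0)) :
    ∃ g : ℤ × ℤ → ℤ × ℤ, Function.Injective g ∧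
      (∀ u v, taxiStep u v → taxiStep (g u) (g v)) ∧
      (∀ u v w x, perp (g u - g v) (g w - g x) ↔ perp (u - v) (w - x)) ∧
      g p0 = 0 ∧ g v1 = t := by
  have h' : taxiStep (0 : ℤ × ℤ) (normMap p0 v1) := by
    have := tw_normMap_step p0 p0 v1 h
    rwa [tw_normMap_self] at this
  have he : normMap p0 v1 = (1, 0) ∨ normMap p0 v1 = (0, 1) := by
    rw [tw_step_iff] at h'
    rcases h' with ⟨h1, h2⟩ | ⟨h1, h2⟩
    · left; exact Prod.ext (by simpa using h2) (by simpa using h1)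
    · right; exact Prod.ext (by simpa using h1) (by simpa using h2)
  by_cases hcase : normMap p0 v1 = t
  · exact ⟨normMap p0, tw_normMap_inj p0, fun u v => tw_normMap_step p0 u v,
      fun u v w x => tw_normMap_perp p0 u v w x, tw_normMap_self p0, hcase⟩
  · refine ⟨fun q => twSw (normMap p0 q), fun a b hab => tw_normMap_inj p0 (tw_sw_inj hab),
      fun u v hv => tw_sw_step _ _ (tw_normMap_step p0 u v hv),
      fun u v w x => (tw_sw_perp _ _ _ _).trans (tw_normMap_perp p0 u v w x), ?_, ?_⟩
    · show twSw (normMap p0 p0) = 0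
      rw [tw_normMap_self]; rfl
    · rcases he with he | he <;> rcases ht with ht | ht <;>
        simp only [he, ht, twSw] at hcase ⊢ <;>
        first | rfl | exact absurd rfl hcase | exact absurd trivial hcase

private theorem tw_turnWord_getD (l : List (ℤ × ℤ)) (m : ℕ) (h : m < l.length - 2) :
    (turnWord l).getD m false = decide (turnAt l (m + 1)) := by
  unfold turnWord
  rw [List.getD_eq_getElem _ _ (by simpa using h)]
  simp

private theorem tw_turnAt_succ (l : List (ℤ × ℤ)) (i : ℕ) :
    turnAt l (i + 1) ↔
      perp (l.getD (i + 1) 0 - l.getD i 0) (l.getD (i + 2) 0 - l.getD (i + 1) 0) := by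
  unfold turnAt
  norm_num

end TaxiAux

/-- If `σ'` is a taxi polygon, then `σ'` does not occur as a factor (a
string of consecutive letters) of the turn-word of any taxi walk starting at the origin. -/
theorem taxiPolygon_not_infix_of_turnWord (σ' : List Bool) (hσ' : ∃ k, IsTaxiPolygon k σ')
    (n : ℕ) (l : List (ℤ × ℤ)) (hl : l ∈ originWalks n) :
    ¬ List.IsInfix σ' (turnWord l) := by
  rintro ⟨s, t, hst⟩
  obtain ⟨k, hk1, w, hwlen, hw0, hw1, hwstep, hwk, -, -, hwturn⟩ := hσ'
  obtain ⟨⟨-, hnodup, hlstep, -⟩, hllen, -⟩ := hl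
  -- degenerate case `k = 1`
  rcases Nat.eq_zero_or_pos σ'.length with hσ0 | hσpos
  · have hk : k = 1 := by omega
    rw [hk] at hwk
    rcases hw1 with h1 | h1 <;> rw [hwk] at h1 <;> simp [Prod.ext_iff] at h1
  set j := s.length with hj
  -- length bookkeeping
  have htwlen : (turnWord l).length = l.length - 2 := by simp [turnWord]
  have hstlen : j + σ'.length + t.length = l.length - 2 := by
    have := congrArg List.length hst
    simp [htwlen] at this
    omega
  have hwlen' : w.length = k + 1 := hwlen
  have hlenk : σ'.length + 1 = k := hk1
  have hlen3 : 3 ≤ l.length := by omega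
  have hjk : j + k + 1 ≤ l.length := by omega
  -- the turn letters of `l` along the window
  have hfactor : ∀ m, m < σ'.length →
      decide (turnAt l (j + m + 1)) = σ'.getD m false := by
    intro m hm
    have h1 : (turnWord l).getD (j + m) false = σ'.getD m false := by
      rw [← hst, List.append_assoc, List.getD_append_right _ _ _ _ (by omega),
        List.getD_append _ _ _ _ (by omega)]
      congr 1
      omega
    rw [← h1, tw_turnWord_getD l (j + m) (by omega)]
  -- the turn letters of the polygon
  have hpturn : ∀ m, m < σ'.length →
      decide (turnAt w (m + 1)) = σ'.getD m false := by
    intro m hm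
    rw [← hwturn, tw_turnWord_getD w m (by rw [hwlen']; omega)]
  -- the symmetry
  have hstep0 : taxiStep (l.getD j 0) (l.getD (j + 1) 0) := hlstep j (by omega)
  obtain ⟨g, ginj, gstep, gperp, g0, g1⟩ :=
    tw_exists_sym (l.getD j 0) (l.getD (j + 1) 0) (w.getD 1 0) hstep0 hw1
  -- the key induction
  have key : ∀ i, i ≤ k → g (l.getD (j + i) 0) = w.getD i 0 := by
    intro i
    induction i using Nat.strong_induction_on with
    | _ i IH =>
      match i with
      | 0 => intro _; rw [Nat.add_zero, g0, hw0]
      | 1 => intro _; exact g1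
      | (m + 2) =>
        intro hik
        have hm0 : g (l.getD (j + m) 0) = w.getD m 0 := IH m (by omega) (by omega)
        have hm1 : g (l.getD (j + m + 1) 0) = w.getD (m + 1) 0 := by
          have := IH (m + 1) (by omega) (by omega)
          rwa [← Nat.add_assoc] at this
        have hsl1 : taxiStep (l.getD (j + m + 1) 0) (l.getD (j + m + 2) 0) :=
          hlstep (j + m + 1) (by omega)
        have hsw0 : taxiStep (w.getD m 0) (w.getD (m + 1) 0) :=
          hwstep m (by rw [hwlen']; omega)
        have hsw1 : taxiStep (w.getD (m + 1) 0) (w.getD (m + 2) 0) :=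
          hwstep (m + 1) (by rw [hwlen']; omega)
        have hiff : turnAt l (j + m + 1) ↔ turnAt w (m + 1) := by
          have h1 := hfactor m (by omega)
          have h2 := hpturn m (by omega)
          exact decide_eq_decide.mp (h1.trans h2.symm)
        have hg2 : taxiStep (w.getD (m + 1) 0) (g (l.getD (j + m + 2) 0)) := by
          rw [← hm1]; exact gstep _ _ hsl1
        have hperp : perp (w.getD (m + 1) 0 - w.getD m 0)
              (w.getD (m + 2) 0 - w.getD (m + 1) 0) ↔
            perp (w.getD (m + 1) 0 - w.getD m 0)
              (g (l.getD (j + m + 2) 0) - w.getD (m + 1) 0) := by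
          rw [← tw_turnAt_succ w m, ← hm0, ← hm1, gperp, ← hiff]
          have : j + m + 2 = j + (m + 2) := by omega
          exact (tw_turnAt_succ l (j + m)).symm
        have := tw_stepDet (w.getD m 0) (w.getD (m + 1) 0) (w.getD (m + 2) 0)
          (g (l.getD (j + m + 2) 0)) hsw0 hsw1 hg2 hperp
        have hadd : j + (m + 2) = j + m + 2 := by omega
        rw [hadd, ← this]
  -- conclusion
  have hfin : g (l.getD (j + k) 0) = g (l.getD j 0) := by
    rw [key k le_rfl, hwk, g0]
  have heq : l.getD (j + k) 0 = l.getD j 0 := ginj hfin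
  rw [List.getD_eq_getElem _ _ (by omega), List.getD_eq_getElem _ _ (by omega)] at heq
  have := (List.Nodup.getElem_inj_iff hnodup).mp heq
  omega
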